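/- Every element of the cut space of the complete graph K_ℓ is an eigenvector of the matrix Σ (with entries as in the covariance matrix under the Impartial Culture assumption) with eigenvalue 1 + (ℓ-2)/3; in particular, for each vertex i, Σ · (Σ_{j≠i} (i,j)) = (1 + (ℓ-2)/3) · Σ_{j≠i} (i,j). -/

import Mathlib

open Finset Matrix

/-- Edges of the complete graph `K_ℓ`, oriented from smaller to larger index. -/
abbrev Edge (ℓ : ℕ) := {p : Fin ℓ × Fin ℓ // p.1 < p.2}

/-- The signed entry `Σ_{(a,b),(c,d)}` of the covariance matrix, with the
conventions `Σ_{(j,i),(r,s)} = -Σ_{(i,j),(r,s)}` and `Σ_{(i,j),(s,r)} = -Σ_{(i,j),(r,s)}`: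
it is 1 on equal oriented edges, ±1/3 on edges sharing exactly one vertex,
and 0 on disjoint edges. -/
noncomputable def sigEntry {ℓ : ℕ} (a b c d : Fin ℓ) : ℝ :=
  if a = c ∧ b = d then 1
  else if a = d ∧ b = c then -1
  else if a = c ∨ b = d then 1/3
  else if a = d ∨ b = c then -1/3
  else 0

/-- The covariance matrix `Σ` on the edge space of `K_ℓ`. -/
noncomputable def SigMat (ℓ : ℕ) : Matrix (Edge ℓ) (Edge ℓ) ℝ :=
  fun e f => sigEntry e.1.1 e.1.2 f.1.1 f.1.2

/-- The boundary (incidence) matrix of `K_ℓ`, sending the edge `(u,v)` to `u - v`. -/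
noncomputable def bdry (ℓ : ℕ) : Matrix (Fin ℓ) (Edge ℓ) ℝ :=
  fun u e => if e.1.1 = u then 1 else if e.1.2 = u then -1 else 0

/-- The cycle space of `K_ℓ`: the kernel of the boundary map. -/
noncomputable def cycleSpace (ℓ : ℕ) : Submodule ℝ (Edge ℓ → ℝ) :=
  LinearMap.ker (Matrix.toLin' (bdry ℓ))

/-- The star vector at vertex `i`: the sum of all outgoing edges `(i,j)`,
with the sign convention `(j,i) = -(i,j)`. -/
noncomputable def starVec (ℓ : ℕ) (i : Fin ℓ) : Edge ℓ → ℝ :=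
  fun e => if e.1.1 = i then 1 else if e.1.2 = i then -1 else 0

/-- The cut space of `K_ℓ`: the span of the star vectors. -/
noncomputable def cutSpace (ℓ : ℕ) : Submodule ℝ (Edge ℓ → ℝ) :=
  Submodule.span ℝ (Set.range (starVec ℓ))

/-- The antisymmetric extension of an edge-space vector to all ordered pairs,
with the convention `x_{(j,i)} = -x_{(i,j)}`. -/
noncomputable def extAS {ℓ : ℕ} (x : Edge ℓ → ℝ) (i j : Fin ℓ) : ℝ :=
  if h : i < j then x ⟨(i, j), h⟩ else if h : j < i then -x ⟨(j, i), h⟩ else 0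

/-- The net signed flow out of vertex `i`. -/
noncomputable def flow {ℓ : ℕ} (x : Edge ℓ → ℝ) (i : Fin ℓ) : ℝ := ∑ j, extAS x i j

/- ### Auxiliary lemmas -/

lemma sum_edge {ℓ : ℕ} (g : Fin ℓ → Fin ℓ → ℝ) :
    ∑ e : Edge ℓ, g e.1.1 e.1.2 = ∑ c : Fin ℓ, ∑ d : Fin ℓ, if c < d then g c d else 0 := by
  have h1 : ∑ p ∈ Finset.univ.filter (fun p : Fin ℓ × Fin ℓ => p.1 < p.2), g p.1 p.2
      = ∑ e : Edge ℓ, g e.1.1 e.1.2 :=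
    Finset.sum_subtype _ (fun p => by simp) (fun p : Fin ℓ × Fin ℓ => g p.1 p.2)
  rw [← h1, Finset.sum_filter, Fintype.sum_prod_type]

lemma sigEntry_eq {ℓ : ℕ} (a b c d : Fin ℓ) (hab : a < b) (hcd : c < d) :
    sigEntry a b c d =
      1/3 * (((if a = c then (1:ℝ) else 0) - (if a = d then 1 else 0))
        - ((if b = c then 1 else 0) - (if b = d then 1 else 0)))
      + 1/3 * (if a = c ∧ b = d then 1 else 0) := by
  unfold sigEntry
  split_ifs <;>
    first
      | ring1
      | (exfalso; simp only [Fin.lt_def, Fin.ext_iff, not_and, not_or] at *; omega)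

lemma bdry_diff {ℓ : ℕ} (u : Fin ℓ) (e : Edge ℓ) :
    bdry ℓ u e = (if e.1.1 = u then (1:ℝ) else 0) - (if e.1.2 = u then 1 else 0) := by
  have hne : e.1.1 ≠ e.1.2 := ne_of_lt e.2
  unfold bdry
  split_ifs with h1 h2 h2 <;> first | ring1 | (exfalso; exact hne (h1.trans h2.symm))

/-- `Σ = (1/3) ∂ᵀ∂ + (1/3) 1`. -/
lemma sig_factor (ℓ : ℕ) :
    SigMat ℓ = (1/3 : ℝ) • ((bdry ℓ)ᵀ * bdry ℓ) + (1/3 : ℝ) • (1 : Matrix (Edge ℓ) (Edge ℓ) ℝ) := by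
  ext e f
  have hmul : ((bdry ℓ)ᵀ * bdry ℓ) e f = ∑ u : Fin ℓ, bdry ℓ u e * bdry ℓ u f := by
    simp [Matrix.mul_apply, Matrix.transpose_apply]
  have hsum : ∑ u : Fin ℓ, bdry ℓ u e * bdry ℓ u f
      = ((if e.1.1 = f.1.1 then (1:ℝ) else 0) - (if e.1.1 = f.1.2 then 1 else 0))
        - ((if e.1.2 = f.1.1 then 1 else 0) - (if e.1.2 = f.1.2 then 1 else 0)) := by
    have h : ∀ u : Fin ℓ, bdry ℓ u e * bdry ℓ u f
        = ((if e.1.1 = u then (1:ℝ) else 0) * (if f.1.1 = u then 1 else 0)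
          - (if e.1.1 = u then (1:ℝ) else 0) * (if f.1.2 = u then 1 else 0))
          - ((if e.1.2 = u then (1:ℝ) else 0) * (if f.1.1 = u then 1 else 0)
          - (if e.1.2 = u then (1:ℝ) else 0) * (if f.1.2 = u then 1 else 0)) := by
      intro u
      rw [bdry_diff, bdry_diff]; ring
    rw [Finset.sum_congr rfl (fun u _ => h u)]
    simp [Finset.sum_sub_distrib, ite_mul, zero_mul, one_mul, Finset.sum_ite_eq]
  have hef : ((1 : Matrix (Edge ℓ) (Edge ℓ) ℝ) e f) = if e.1.1 = f.1.1 ∧ e.1.2 = f.1.2 then 1 else 0 := by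
    rw [Matrix.one_apply]
    congr 1
    simp [Subtype.ext_iff, Prod.ext_iff]
  simp only [Matrix.add_apply, Matrix.smul_apply, hmul, hsum, hef, smul_eq_mul]
  exact sigEntry_eq e.1.1 e.1.2 f.1.1 f.1.2 e.2 f.2

lemma sum_lt_ind {ℓ : ℕ} (x c : Fin ℓ) :
    ∑ d : Fin ℓ, (if c < d then (if d = x then (1:ℝ) else 0) else 0)
      = (if c < x then (1:ℝ) else 0) := by
  have h : ∀ d : Fin ℓ, (if c < d then (if d = x then (1:ℝ) else 0) else 0)
      = if d = x then (if c < x then (1:ℝ) else 0) else 0 := by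
    intro d
    by_cases hdx : d = x
    · subst hdx; simp
    · simp [hdx]
  rw [Finset.sum_congr rfl (fun d _ => h d), Finset.sum_ite_eq' Finset.univ x
    (fun _ => if c < x then (1:ℝ) else 0), if_pos (Finset.mem_univ x)]

lemma sum_ind_mul_ind {ℓ : ℕ} (u i : Fin ℓ) :
    ∑ c : Fin ℓ, (if c = u then (1:ℝ) else 0) * (if c = i then 1 else 0)
      = (if u = i then (1:ℝ) else 0) := by
  have h : ∀ c : Fin ℓ, (if c = u then (1:ℝ) else 0) * (if c = i then 1 else 0)
      = if c = u then (if u = i then (1:ℝ) else 0) else 0 := by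
    intro c
    by_cases hc : c = u
    · subst hc; simp
    · simp [hc]
  rw [Finset.sum_congr rfl (fun c _ => h c), Finset.sum_ite_eq' Finset.univ u
    (fun _ => if u = i then (1:ℝ) else 0), if_pos (Finset.mem_univ u)]

lemma sum_ind_mul_lt {ℓ : ℕ} (u i : Fin ℓ) :
    ∑ c : Fin ℓ, (if c = u then (1:ℝ) else 0) * (if c < i then 1 else 0)
      = (if u < i then (1:ℝ) else 0) := by
  have h : ∀ c : Fin ℓ, (if c = u then (1:ℝ) else 0) * (if c < i then 1 else 0)
      = if c = u then (if u < i then (1:ℝ) else 0) else 0 := by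
    intro c
    by_cases hc : c = u
    · subst hc; simp
    · simp [hc]
  rw [Finset.sum_congr rfl (fun c _ => h c), Finset.sum_ite_eq' Finset.univ u
    (fun _ => if u < i then (1:ℝ) else 0), if_pos (Finset.mem_univ u)]

lemma sum_lt_add_gt {ℓ : ℕ} (c : Fin ℓ) :
    ∑ d : Fin ℓ, ((if c < d then (1:ℝ) else 0) + (if d < c then 1 else 0)) = (ℓ:ℝ) - 1 := by
  have h : ∀ d : Fin ℓ, ((if c < d then (1:ℝ) else 0) + (if d < c then 1 else 0))
      = 1 - (if d = c then 1 else 0) := by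
    intro d
    rcases lt_trichotomy c d with h | h | h
    · simp [h, not_lt_of_gt h, (ne_of_lt h).symm]
    · simp [h, lt_irrefl]
    · simp [h, not_lt_of_gt h, ne_of_lt h]
  rw [Finset.sum_congr rfl (fun d _ => h d), Finset.sum_sub_distrib,
    Finset.sum_ite_eq' Finset.univ c (fun _ => (1:ℝ)), if_pos (Finset.mem_univ c)]
  simp

lemma hS14 {ℓ : ℕ} (u i : Fin ℓ) :
    ∑ c : Fin ℓ, ∑ d : Fin ℓ,
        (if c < d then (1:ℝ) else 0) * ((if c = u then (1:ℝ) else 0) * (if c = i then 1 else 0))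
      + ∑ c : Fin ℓ, ∑ d : Fin ℓ,
        (if c < d then (1:ℝ) else 0) * ((if d = u then (1:ℝ) else 0) * (if d = i then 1 else 0))
      = (if u = i then (1:ℝ) else 0) * ((ℓ:ℝ) - 1) := by
  rw [Finset.sum_comm (f := fun c d =>
    (if c < d then (1:ℝ) else 0) * ((if d = u then (1:ℝ) else 0) * (if d = i then 1 else 0)))]
  rw [← Finset.sum_add_distrib]
  have h : ∀ c : Fin ℓ, (∑ d : Fin ℓ,
        (if c < d then (1:ℝ) else 0) * ((if c = u then (1:ℝ) else 0) * (if c = i then 1 else 0))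
      + ∑ d : Fin ℓ, (if d < c then (1:ℝ) else 0) * ((if c = u then (1:ℝ) else 0) * (if c = i then 1 else 0)))
      = ((if c = u then (1:ℝ) else 0) * (if c = i then 1 else 0)) * ((ℓ:ℝ) - 1) := by
    intro c
    rw [← Finset.sum_add_distrib]
    have h2 : ∀ d : Fin ℓ,
        ((if c < d then (1:ℝ) else 0) * ((if c = u then (1:ℝ) else 0) * (if c = i then 1 else 0))
        + (if d < c then (1:ℝ) else 0) * ((if c = u then (1:ℝ) else 0) * (if c = i then 1 else 0)))
        = ((if c = u then (1:ℝ) else 0) * (if c = i then 1 else 0))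
          * ((if c < d then (1:ℝ) else 0) + (if d < c then 1 else 0)) := by
      intro d; ring
    rw [Finset.sum_congr rfl (fun d _ => h2 d), ← Finset.mul_sum, sum_lt_add_gt]
  rw [Finset.sum_congr rfl (fun c _ => h c)]
  rw [← Finset.sum_mul, sum_ind_mul_ind]

lemma bdry_mulVec_star {ℓ : ℕ} (i : Fin ℓ) :
    (bdry ℓ).mulVec (starVec ℓ i) = fun u => (ℓ : ℝ) * (if u = i then 1 else 0) - 1 := by
  funext u
  have h0 : (bdry ℓ).mulVec (starVec ℓ i) u
      = ∑ c : Fin ℓ, ∑ d : Fin ℓ, if c < d then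
          (if c = u then (1:ℝ) else if d = u then -1 else 0)
          * (if c = i then 1 else if d = i then -1 else 0) else 0 := by
    rw [Matrix.mulVec, dotProduct]
    exact sum_edge (fun c d => (if c = u then (1:ℝ) else if d = u then -1 else 0)
      * (if c = i then 1 else if d = i then -1 else 0))
  rw [h0]
  have hsplit : ∀ c d : Fin ℓ, (if c < d then
          (if c = u then (1:ℝ) else if d = u then -1 else 0)
          * (if c = i then 1 else if d = i then -1 else 0) else 0)
      = ((if c < d then (1:ℝ) else 0) * ((if c = u then (1:ℝ) else 0) * (if c = i then 1 else 0))
        - (if c = u then (1:ℝ) else 0) * (if c < d then (if d = i then (1:ℝ) else 0) else 0))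
        - ((if c = i then (1:ℝ) else 0) * (if c < d then (if d = u then (1:ℝ) else 0) else 0)
        - (if c < d then (1:ℝ) else 0) * ((if d = u then (1:ℝ) else 0) * (if d = i then 1 else 0))) := by
    intro c d
    by_cases h : c < d
    · have hne : c ≠ d := ne_of_lt h
      simp only [if_pos h]
      split_ifs <;> first | ring1 | (exfalso; simp_all)
    · simp [h]
  rw [Finset.sum_congr rfl (fun c _ => Finset.sum_congr rfl (fun d _ => hsplit c d))]
  simp only [Finset.sum_sub_distrib]
  have hS2 : ∑ c : Fin ℓ, ∑ d : Fin ℓ,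
      (if c = u then (1:ℝ) else 0) * (if c < d then (if d = i then (1:ℝ) else 0) else 0)
      = (if u < i then (1:ℝ) else 0) := by
    have h : ∀ c : Fin ℓ, ∑ d : Fin ℓ,
        (if c = u then (1:ℝ) else 0) * (if c < d then (if d = i then (1:ℝ) else 0) else 0)
        = (if c = u then (1:ℝ) else 0) * (if c < i then 1 else 0) := by
      intro c
      rw [← Finset.mul_sum, sum_lt_ind]
    rw [Finset.sum_congr rfl (fun c _ => h c), sum_ind_mul_lt]
  have hS3 : ∑ c : Fin ℓ, ∑ d : Fin ℓ,
      (if c = i then (1:ℝ) else 0) * (if c < d then (if d = u then (1:ℝ) else 0) else 0)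
      = (if i < u then (1:ℝ) else 0) := by
    have h : ∀ c : Fin ℓ, ∑ d : Fin ℓ,
        (if c = i then (1:ℝ) else 0) * (if c < d then (if d = u then (1:ℝ) else 0) else 0)
        = (if c = i then (1:ℝ) else 0) * (if c < u then 1 else 0) := by
      intro c
      rw [← Finset.mul_sum, sum_lt_ind]
    rw [Finset.sum_congr rfl (fun c _ => h c), sum_ind_mul_lt]
  rw [hS2, hS3]
  have h14 := hS14 u i
  have key : (if u = i then (1:ℝ) else 0) * ((ℓ:ℝ) - 1) - (if u < i then (1:ℝ) else 0)
      - (if i < u then (1:ℝ) else 0) = (ℓ:ℝ) * (if u = i then 1 else 0) - 1 := by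
    rcases lt_trichotomy u i with h | h | h
    · simp [h, ne_of_lt h, not_lt_of_gt h]
    · simp [h, lt_irrefl]
    · simp [h, (ne_of_lt h).symm, not_lt_of_gt h]
  linarith [h14, key]

lemma bdryT_mulVec {ℓ : ℕ} (i : Fin ℓ) :
    (bdry ℓ)ᵀ.mulVec (fun u => (ℓ : ℝ) * (if u = i then 1 else 0) - 1)
      = (ℓ : ℝ) • starVec ℓ i := by
  funext e
  rw [Matrix.mulVec, dotProduct]
  have h : ∀ u : Fin ℓ, (bdry ℓ)ᵀ e u * ((ℓ : ℝ) * (if u = i then 1 else 0) - 1)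
      = (if u = i then (ℓ : ℝ) * bdry ℓ u e else 0)
        - ((if e.1.1 = u then (1:ℝ) else 0) - (if e.1.2 = u then 1 else 0)) := by
    intro u
    rw [Matrix.transpose_apply, ← bdry_diff]
    by_cases hu : u = i <;> simp [hu] <;> ring
  rw [Finset.sum_congr rfl (fun u _ => h u)]
  rw [Finset.sum_sub_distrib, Finset.sum_sub_distrib,
    Finset.sum_ite_eq' Finset.univ i (fun u => (ℓ : ℝ) * bdry ℓ u e), if_pos (Finset.mem_univ i)]
  have h1 : ∑ u : Fin ℓ, (if e.1.1 = u then (1:ℝ) else 0) = 1 := by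
    rw [Finset.sum_ite_eq Finset.univ e.1.1 (fun _ => (1:ℝ)), if_pos (Finset.mem_univ _)]
  have h2 : ∑ u : Fin ℓ, (if e.1.2 = u then (1:ℝ) else 0) = 1 := by
    rw [Finset.sum_ite_eq Finset.univ e.1.2 (fun _ => (1:ℝ)), if_pos (Finset.mem_univ _)]
  rw [h1, h2]
  show (ℓ : ℝ) * bdry ℓ i e - (1 - 1) = (ℓ : ℝ) * starVec ℓ i e
  have : bdry ℓ i e = starVec ℓ i e := rfl
  rw [this]; ring

lemma star_eigen {ℓ : ℕ} (i : Fin ℓ) :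
    (SigMat ℓ).mulVec (starVec ℓ i) = (1 + ((ℓ : ℝ) - 2) / 3) • starVec ℓ i := by
  rw [sig_factor]
  rw [Matrix.add_mulVec, Matrix.smul_mulVec, Matrix.smul_mulVec,
    Matrix.one_mulVec, ← Matrix.mulVec_mulVec, bdry_mulVec_star, bdryT_mulVec]
  funext e
  simp only [Pi.add_apply, Pi.smul_apply, smul_eq_mul]
  ring

/-- Every element of the cut space of `K_ℓ` is an eigenvector of `Σ` with
eigenvalue `1 + (ℓ-2)/3`; in particular this holds for each star vector
`Σ_{j≠i} (i,j)`. -/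
theorem cut_space_eigenvector {ℓ : ℕ} (hℓ : 2 ≤ ℓ) :
    (∀ x ∈ cutSpace ℓ, (SigMat ℓ).mulVec x = (1 + ((ℓ : ℝ) - 2) / 3) • x) ∧
    (∀ i : Fin ℓ, (SigMat ℓ).mulVec (starVec ℓ i) = (1 + ((ℓ : ℝ) - 2) / 3) • starVec ℓ i) := by
  constructor
  · intro x hx
    set lam : ℝ := 1 + ((ℓ : ℝ) - 2) / 3 with hlam
    let f : (Edge ℓ → ℝ) →ₗ[ℝ] (Edge ℓ → ℝ) :=
      Matrix.toLin' (SigMat ℓ) - lam • LinearMap.id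
    have hker : cutSpace ℓ ≤ LinearMap.ker f := by
      rw [cutSpace, Submodule.span_le]
      rintro _ ⟨i, rfl⟩
      simp only [SetLike.mem_coe, LinearMap.mem_ker, f, LinearMap.sub_apply,
        LinearMap.smul_apply, LinearMap.id_apply, Matrix.toLin'_apply]
      rw [star_eigen i]
      simp [hlam]
    have := hker hx
    simp only [LinearMap.mem_ker, f, LinearMap.sub_apply, LinearMap.smul_apply,
      LinearMap.id_apply, Matrix.toLin'_apply, sub_eq_zero] at this
    exact this
  · exact fun i => star_eigen i
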